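/- Let X_1,...,X_T be exchangeable real-valued random variables with a continuous (atomless) joint distribution, and let S_t = X_1 + ... + X_t with S_0 = 0. Then the expected number of vertices of the convex minorant (lower convex hull) of the points (t, S_t), t = 0,1,...,T, excluding the endpoint (0,0), is at most ∑_{k=1}^T 1/k ≤ log(T) + 1. -/

import Mathlib

open MeasureTheory
open scoped Classical ProbabilityTheory

open Finset
namespace SA


/-- zero-extended increments -/
def ext (T : ℕ) (v : Fin T → ℝ) (p : ℕ) : ℝ := if h : p < T then v ⟨p, h⟩ else 0

/-- walk -/
def wk (T : ℕ) (v : Fin T → ℝ) (r : ℕ) : ℝ := ∑ p ∈ Finset.range r, ext T v p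

lemma wk_succ (T v r) : wk T v (r+1) = wk T v r + ext T v r := Finset.sum_range_succ _ _

lemma wk_add (T v m n) : wk T v (m + n) = wk T v m + ∑ i ∈ Finset.range n, ext T v (m + i) := by
  induction n with
  | zero => simp [wk]
  | succ n ih => rw [← Nat.add_assoc, wk_succ, ih, Finset.sum_range_succ]; ring

/-- the Fin-sum walk from the theorem statement equals `wk` -/
lemma wv_eq (T : ℕ) (v : Fin T → ℝ) (t : ℕ) :
    (∑ i : Fin T, if (i : ℕ) < t then v i else 0) = wk T v t := by
  have h1 : (∑ i : Fin T, if (i : ℕ) < t then v i else 0)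
      = ∑ p ∈ Finset.range T, (if p < t then ext T v p else 0) := by
    rw [Finset.sum_range fun p => _]
    · apply Finset.sum_congr rfl
      intro i _
      by_cases h : (i : ℕ) < t
      · simp [h, ext, i.2]
      · simp [h]
  rw [h1]
  rcases le_or_gt t T with h | h
  · have : Finset.range T = Finset.range (t + (T - t)) := by congr 1; omega
    rw [this, Finset.sum_range_add]
    have e1 : ∑ i ∈ Finset.range t, (if i < t then ext T v i else 0) = wk T v t := by
      apply Finset.sum_congr rfl; intro i hi; simp [Finset.mem_range.mp hi]
    have e2 : ∑ i ∈ Finset.range (T - t), (if t + i < t then ext T v (t + i) else 0) = 0 := by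
      apply Finset.sum_eq_zero; intro i _; simp
    rw [e1, e2, add_zero]
  · have : Finset.range t = Finset.range (T + (t - T)) := by congr 1; omega
    have hwk : wk T v t = wk T v T := by
      rw [wk, this, Finset.sum_range_add, ← wk]
      have : ∑ i ∈ Finset.range (t - T), ext T v (T + i) = 0 := by
        apply Finset.sum_eq_zero; intro i _; simp [ext]
      rw [this, add_zero]
    rw [hwk]
    apply Finset.sum_congr rfl
    intro i hi
    simp [Finset.mem_range.mp hi, (Nat.lt_of_lt_of_le (Finset.mem_range.mp hi) h.le)]



/-- position map: moves block `[s, s+ℓ)` (rotated by `a`) to the final `ℓ` positions -/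
def pf (T s ℓ a p : ℕ) : ℕ :=
  if p < s then p else if p < T - ℓ then p + ℓ else s + (p - (T - ℓ) + a) % ℓ

lemma unrot {ℓ a j : ℕ} (ha : a < ℓ) (hj : j < ℓ) : ((j + a) % ℓ + (ℓ - a)) % ℓ = j := by
  rw [Nat.mod_add_mod]
  have : j + a + (ℓ - a) = j + ℓ := by omega
  rw [this, Nat.add_mod_right, Nat.mod_eq_of_lt hj]

lemma pf_lt {T s ℓ a : ℕ} (hsl : s + ℓ ≤ T) (ha : a < ℓ) {p : ℕ} (hp : p < T) :
    pf T s ℓ a p < T := by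
  unfold pf
  have h1 : (p - (T - ℓ) + a) % ℓ < ℓ := Nat.mod_lt _ (by omega)
  split_ifs <;> omega

lemma pf_inj {T s ℓ a : ℕ} (hsl : s + ℓ ≤ T) (ha : a < ℓ) {p q : ℕ}
    (hp : p < T) (hq : q < T) (h : pf T s ℓ a p = pf T s ℓ a q) : p = q := by
  unfold pf at h
  have h1 : (p - (T - ℓ) + a) % ℓ < ℓ := Nat.mod_lt _ (by omega)
  have h2 : (q - (T - ℓ) + a) % ℓ < ℓ := Nat.mod_lt _ (by omega)
  split_ifs at h with c1 c2 c3 c4 c5 c6 c7 c8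
  any_goals omega
  -- both in block
  have e1 := unrot ha (show p - (T - ℓ) < ℓ by omega)
  have e2 := unrot ha (show q - (T - ℓ) < ℓ by omega)
  have : (p - (T - ℓ) + a) % ℓ = (q - (T - ℓ) + a) % ℓ := by omega
  rw [this] at e1
  omega

/-- the block-moving permutation of `Fin T` -/
noncomputable def mkPerm (T s ℓ a : ℕ) : Equiv.Perm (Fin T) :=
  if h : s + ℓ ≤ T ∧ a < ℓ then
    Equiv.ofBijective (fun p : Fin T => ⟨pf T s ℓ a p.1, pf_lt h.1 h.2 p.2⟩)
      ((Finite.injective_iff_bijective).mp (fun p q hpq => by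
        apply Fin.ext
        exact pf_inj h.1 h.2 p.2 q.2 (congrArg Fin.val hpq)))
  else 1

lemma mkPerm_apply {T s ℓ a : ℕ} (hsl : s + ℓ ≤ T) (ha : a < ℓ) (p : Fin T) :
    ((mkPerm T s ℓ a p : Fin T) : ℕ) = pf T s ℓ a p.1 := by
  rw [mkPerm, dif_pos ⟨hsl, ha⟩]
  rfl

/-- tilted block walk -/
noncomputable def tilt (T : ℕ) (u : Fin T → ℝ) (s ℓ m : ℕ) : ℝ :=
  wk T u (s+m) - wk T u s - ((wk T u (s+ℓ) - wk T u s)/(ℓ:ℝ)) * m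

variable {T s ℓ a : ℕ} {v : Fin T → ℝ} {σ τ : Equiv.Perm (Fin T)}

lemma ext_comp (hτ : ∀ p : Fin T, ((τ p : Fin T) : ℕ) = pf T s ℓ a p.1)
    (hsl : s + ℓ ≤ T) (ha : a < ℓ) {p : ℕ} (hp : p < T) :
    ext T (v ∘ σ ∘ τ) p = ext T (v ∘ σ) (pf T s ℓ a p) := by
  have hpf : pf T s ℓ a p < T := by
    unfold pf
    have h1 : (p - (T - ℓ) + a) % ℓ < ℓ := Nat.mod_lt _ (by omega)
    split_ifs <;> omega
  rw [ext, ext, dif_pos hp, dif_pos hpf]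
  have : τ ⟨p, hp⟩ = ⟨pf T s ℓ a p, hpf⟩ := Fin.ext (hτ ⟨p, hp⟩)
  simp [this]

lemma W1 (hτ : ∀ p : Fin T, ((τ p : Fin T) : ℕ) = pf T s ℓ a p.1)
    (hsl : s + ℓ ≤ T) (ha : a < ℓ) {r : ℕ} (hr : r ≤ s) :
    wk T (v ∘ σ ∘ τ) r = wk T (v ∘ σ) r := by
  apply Finset.sum_congr rfl
  intro p hp
  have hps : p < s := lt_of_lt_of_le (Finset.mem_range.mp hp) hr
  rw [ext_comp hτ hsl ha (by omega), pf, if_pos hps]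

lemma W2 (hτ : ∀ p : Fin T, ((τ p : Fin T) : ℕ) = pf T s ℓ a p.1)
    (hsl : s + ℓ ≤ T) (ha : a < ℓ) {r : ℕ} (hs : s ≤ r) (hr : r ≤ T - ℓ) :
    wk T (v ∘ σ ∘ τ) r = wk T (v ∘ σ) (r + ℓ) - (wk T (v ∘ σ) (s + ℓ) - wk T (v ∘ σ) s) := by
  have h1 : r = s + (r - s) := by omega
  have h2 : wk T (v ∘ σ) (r + ℓ) = wk T (v ∘ σ) ((s + ℓ) + (r - s)) := by congr 1; omega
  have L : wk T (v ∘ σ ∘ τ) r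
      = wk T (v ∘ σ) s + ∑ i ∈ Finset.range (r - s), ext T (v ∘ σ ∘ τ) (s + i) := by
    conv_lhs => rw [h1]
    rw [wk_add, W1 hτ hsl ha (le_refl s)]
  rw [L, h2, wk_add]
  have h3 : ∀ i ∈ Finset.range (r - s), ext T (v ∘ σ ∘ τ) (s + i) = ext T (v ∘ σ) (s + ℓ + i) := by
    intro i hi
    have hi' : i < r - s := Finset.mem_range.mp hi
    rw [ext_comp hτ hsl ha (by omega), pf, if_neg (by omega), if_pos (by omega)]
    congr 1; omega
  rw [Finset.sum_congr rfl h3]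
  ring

lemma blk (hτ : ∀ p : Fin T, ((τ p : Fin T) : ℕ) = pf T s ℓ a p.1)
    (hsl : s + ℓ ≤ T) (ha : a < ℓ) :
    ∀ j, j ≤ ℓ → wk T (v ∘ σ ∘ τ) (T - ℓ + j) = wk T (v ∘ σ ∘ τ) (T - ℓ)
      + (tilt T (v ∘ σ) s ℓ ((a + j) % ℓ) - tilt T (v ∘ σ) s ℓ a)
      + ((wk T (v ∘ σ) (s + ℓ) - wk T (v ∘ σ) s)/(ℓ:ℝ)) * j := by
  have hℓ : 0 < ℓ := by omega
  have hstep : ∀ j, j < ℓ → ext T (v ∘ σ ∘ τ) (T - ℓ + j) = ext T (v ∘ σ) (s + (j + a) % ℓ) := by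
    intro j hj
    rw [ext_comp hτ hsl ha (by omega), pf, if_neg (by omega), if_neg (by omega)]
    have e : T - ℓ + j - (T - ℓ) = j := by omega
    rw [e]
  have hcmul : ((wk T (v ∘ σ) (s + ℓ) - wk T (v ∘ σ) s)/(ℓ:ℝ)) * (ℓ:ℝ)
      = wk T (v ∘ σ) (s + ℓ) - wk T (v ∘ σ) s := by
    field_simp
  intro j
  induction j with
  | zero => simp [Nat.mod_eq_of_lt ha]
  | succ j ih =>
    intro hj1
    have hj : j < ℓ := by omega
    have hm : (a + j) % ℓ < ℓ := Nat.mod_lt _ hℓ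
    rw [← Nat.add_assoc, wk_succ, ih (by omega), hstep j hj]
    have hext : ext T (v ∘ σ) (s + (j + a) % ℓ)
        = wk T (v ∘ σ) (s + (j + a) % ℓ + 1) - wk T (v ∘ σ) (s + (j + a) % ℓ) := by
      rw [wk_succ]; ring
    have hja : (j + a) % ℓ = (a + j) % ℓ := by rw [Nat.add_comm]
    by_cases hw : (a + j) % ℓ = ℓ - 1
    · have hnext : (a + (j+1)) % ℓ = 0 := by
        have : a + (j + 1) = (a + j) + 1 := by omega
        rw [this, ← Nat.mod_add_mod, hw]
        have : ℓ - 1 + 1 = ℓ := by omega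
        rw [this, Nat.mod_self]
      rw [hext, hja, hw, hnext]
      simp only [tilt]
      have e1 : s + (ℓ - 1) + 1 = s + ℓ := by omega
      have e2 : ((ℓ - 1 : ℕ) : ℝ) = (ℓ:ℝ) - 1 := by
        have : (1:ℕ) ≤ ℓ := hℓ
        push_cast [this]; ring
      rw [e1, e2]
      push_cast
      have r1 : ((wk T (v ∘ σ) (s + ℓ) - wk T (v ∘ σ) s)/(ℓ:ℝ)) * ((ℓ:ℝ) - 1)
          = ((wk T (v ∘ σ) (s + ℓ) - wk T (v ∘ σ) s)/(ℓ:ℝ)) * (ℓ:ℝ)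
            - ((wk T (v ∘ σ) (s + ℓ) - wk T (v ∘ σ) s)/(ℓ:ℝ)) := by ring
      have r2 : ((wk T (v ∘ σ) (s + ℓ) - wk T (v ∘ σ) s)/(ℓ:ℝ)) * ((j:ℝ) + 1)
          = ((wk T (v ∘ σ) (s + ℓ) - wk T (v ∘ σ) s)/(ℓ:ℝ)) * (j:ℝ)
            + ((wk T (v ∘ σ) (s + ℓ) - wk T (v ∘ σ) s)/(ℓ:ℝ)) := by ring
      simp only [Nat.add_zero, mul_zero]
      linarith [hcmul, r1, r2]
    · have hnext : (a + (j+1)) % ℓ = (a + j) % ℓ + 1 := by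
        have h' : a + (j + 1) = (a + j) + 1 := by omega
        rw [h', ← Nat.mod_add_mod]
        exact Nat.mod_eq_of_lt (by omega)
      rw [hext, hja, hnext]
      simp only [tilt]
      have e1 : s + ((a + j) % ℓ + 1) = s + (a + j) % ℓ + 1 := by omega
      rw [e1]
      push_cast
      ring

noncomputable def slope (T : ℕ) (v : Fin T → ℝ) (i j : ℕ) : ℝ :=
  (wk T v j - wk T v i) / ((j:ℝ) - (i:ℝ))

def pred (T : ℕ) (v : Fin T → ℝ) (t : ℕ) : Prop :=
  ∀ i j : ℕ, i < t → t < j → j ≤ T →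
    wk T v t < wk T v i + (wk T v j - wk T v i) * (((t:ℝ) - i) / ((j:ℝ) - i))

noncomputable def argset (T : ℕ) (v : Fin T → ℝ) (t : ℕ) : Finset ℕ :=
  (Finset.range t).filter (fun i => ∀ i' ∈ Finset.range t, slope T v i' t ≤ slope T v i t)

open Classical in
noncomputable def sfun (T : ℕ) (v : Fin T → ℝ) (t : ℕ) : ℕ :=
  if h : (argset T v t).Nonempty then (argset T v t).max' h else 0

variable {T : ℕ} {v u : Fin T → ℝ} {t : ℕ}

lemma argset_nonempty (ht : 1 ≤ t) : (argset T u t).Nonempty := by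
  obtain ⟨b, hb, hmax⟩ := Finset.exists_max_image (Finset.range t) (fun i => slope T u i t)
    ⟨0, Finset.mem_range.mpr ht⟩
  exact ⟨b, Finset.mem_filter.mpr ⟨hb, hmax⟩⟩

lemma sfun_mem (ht : 1 ≤ t) : sfun T u t ∈ argset T u t := by
  rw [sfun, dif_pos (argset_nonempty ht)]; exact Finset.max'_mem _ _

lemma sfun_lt (ht : 1 ≤ t) : sfun T u t < t :=
  Finset.mem_range.mp (Finset.mem_filter.mp (sfun_mem ht)).1

lemma sfun_max (ht : 1 ≤ t) {i : ℕ} (hi : i < t) :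
    slope T u i t ≤ slope T u (sfun T u t) t :=
  (Finset.mem_filter.mp (sfun_mem ht)).2 i (Finset.mem_range.mpr hi)

lemma sfun_strict (ht : 1 ≤ t) {m : ℕ} (h1 : sfun T u t < m) (h2 : m < t) :
    slope T u m t < slope T u (sfun T u t) t := by
  rcases lt_or_eq_of_le (sfun_max ht h2) with h | h
  · exact h
  · exfalso
    have hm : m ∈ argset T u t := by
      refine Finset.mem_filter.mpr ⟨Finset.mem_range.mpr h2, ?_⟩
      intro i' hi'
      exact le_of_le_of_eq (sfun_max ht (Finset.mem_range.mp hi')) h.symm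
    have : m ≤ sfun T u t := by
      rw [sfun, dif_pos (argset_nonempty ht)]
      exact Finset.le_max' _ _ hm
    omega

lemma pred_slope (hp : pred T u t) {i j : ℕ} (hi : i < t) (hj : t < j) (hjT : j ≤ T) :
    slope T u i t < slope T u t j := by
  have h := hp i j hi hj hjT
  have hx : ((i:ℝ)) < (t:ℝ) := by exact_mod_cast hi
  have hy : ((t:ℝ)) < (j:ℝ) := by exact_mod_cast hj
  rw [slope, slope, div_lt_div_iff₀ (by linarith) (by linarith)]
  have hzx : (0:ℝ) < (j:ℝ) - i := by linarith
  have h' : (wk T u t - wk T u i) * ((j:ℝ) - i) < (wk T u j - wk T u i) * ((t:ℝ) - i) := by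
    rw [mul_comm] at h
    have h2 : wk T u t - wk T u i < (((t:ℝ) - i) / ((j:ℝ) - i)) * (wk T u j - wk T u i) := by
      linarith
    rw [div_mul_eq_mul_div, lt_div_iff₀ hzx] at h2
    linarith [h2]
  have key : (wk T u j - wk T u t) * ((t:ℝ) - i) - (wk T u t - wk T u i) * ((j:ℝ) - t)
      = (wk T u j - wk T u i) * ((t:ℝ) - i) - (wk T u t - wk T u i) * ((j:ℝ) - i) := by ring
  linarith



section Plemmas
set_option linter.unusedSectionVars false
variable {T s ℓ a t : ℕ} {v : Fin T → ℝ} {σ τ : Equiv.Perm (Fin T)}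

lemma wk_total (w : Fin T → ℝ) (π : Equiv.Perm (Fin T)) :
    wk T (w ∘ π) T = wk T w T := by
  have h1 : ∀ w' : Fin T → ℝ, wk T w' T = ∑ i : Fin T, w' i := by
    intro w'
    rw [← wv_eq]
    apply Finset.sum_congr rfl
    intro i _
    simp [i.2]
  rw [h1, h1]
  exact Equiv.sum_comp π _

variable (hτ : ∀ p : Fin T, ((τ p : Fin T) : ℕ) = pf T s ℓ a p.1)
  (ht1 : 1 ≤ t) (htT : t ≤ T) (hts : t = s + ℓ) (ha : a < ℓ)
  (hpred : pred T (v ∘ σ) t) (hsfun : sfun T (v ∘ σ) t = s)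

include hτ hts ha htT in
lemma c_eq : (wk T (v ∘ σ ∘ τ) T - wk T (v ∘ σ ∘ τ) (T - ℓ)) / (ℓ:ℝ)
    = (wk T (v ∘ σ) (s + ℓ) - wk T (v ∘ σ) s) / (ℓ:ℝ) := by
  have hsl : s + ℓ ≤ T := by omega
  have h1 : wk T (v ∘ σ ∘ τ) T = wk T (v ∘ σ) T := by
    have : v ∘ σ ∘ τ = (v ∘ σ) ∘ τ := rfl
    rw [this, wk_total]
  have h2 := W2 (v := v) (σ := σ) hτ hsl ha (show s ≤ T - ℓ by omega) (le_refl (T - ℓ))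
  have h3 : T - ℓ + ℓ = T := by omega
  rw [h3] at h2
  rw [h1, h2]
  ring_nf

-- slope s t equals the block slope
include hts ha htT in
lemma slope_c : slope T (v ∘ σ) s t = (wk T (v ∘ σ) (s + ℓ) - wk T (v ∘ σ) s) / (ℓ:ℝ) := by
  rw [slope, hts]
  congr 1
  push_cast
  ring

include ht1 htT hts ha hsfun in
lemma tilt_pos : ∀ m, 0 < m → m < ℓ → 0 < tilt T (v ∘ σ) s ℓ m := by
  intro m hm0 hmℓ
  have hsl : s + ℓ ≤ T := by omega
  have hst := sfun_lt (u := v ∘ σ) ht1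
  have hstr : slope T (v ∘ σ) (s + m) t < slope T (v ∘ σ) s t := by
    have := sfun_strict (u := v ∘ σ) ht1 (m := s + m) (by omega) (by omega)
    rwa [hsfun] at this
  rw [slope_c htT hts ha] at hstr
  set c0 := (wk T (v ∘ σ) (s + ℓ) - wk T (v ∘ σ) s) / (ℓ:ℝ) with hc0
  have hden : (0:ℝ) < (t:ℝ) - ((s+m:ℕ):ℝ) := by
    have : (s+m) < t := by omega
    have := (Nat.cast_lt (α := ℝ)).mpr this
    linarith
  rw [slope, div_lt_iff₀ hden] at hstr
  have hcl : c0 * (ℓ:ℝ) = wk T (v ∘ σ) (s + ℓ) - wk T (v ∘ σ) s := by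
    rw [hc0]; exact div_mul_cancel₀ _ (Nat.cast_ne_zero.mpr (by omega))
  have hcast : ((s+m:ℕ):ℝ) = (s:ℝ) + m := by push_cast; ring
  have hcast2 : (t:ℝ) = (s:ℝ) + ℓ := by rw [hts]; push_cast; ring
  rw [tilt]
  rw [hcast, hcast2] at hstr
  have : wk T (v ∘ σ) (s+ℓ) - wk T (v ∘ σ) (s+m) < c0 * ((ℓ:ℝ) - m) := by
    rw [hts] at hstr; linarith [hstr]
  have hr : c0 * ((ℓ:ℝ) - (m:ℝ)) = c0 * (ℓ:ℝ) - c0 * (m:ℝ) := by ring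
  nlinarith [hcl, this, hr]

include hτ ht1 htT hts ha hsfun in
lemma P3 : ∀ i : ℕ, i < s →
    wk T (v ∘ σ ∘ τ) s - wk T (v ∘ σ ∘ τ) i
      ≤ ((wk T (v ∘ σ ∘ τ) T - wk T (v ∘ σ ∘ τ) (T - ℓ)) / (ℓ:ℝ)) * ((s:ℝ) - i) := by
  intro i hi
  have hsl : s + ℓ ≤ T := by omega
  rw [c_eq hτ htT hts ha, W1 hτ hsl ha (le_refl s), W1 hτ hsl ha hi.le]
  set c0 := (wk T (v ∘ σ) (s + ℓ) - wk T (v ∘ σ) s) / (ℓ:ℝ) with hc0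
  have hmax : slope T (v ∘ σ) i t ≤ c0 := by
    have := sfun_max (u := v ∘ σ) ht1 (i := i) (by omega)
    rw [hsfun, slope_c htT hts ha] at this
    exact this
  have hden : (0:ℝ) < (t:ℝ) - (i:ℝ) := by
    have : i < t := by omega
    have := (Nat.cast_lt (α := ℝ)).mpr this
    linarith
  rw [slope, div_le_iff₀ hden] at hmax
  have hcl : c0 * (ℓ:ℝ) = wk T (v ∘ σ) (s + ℓ) - wk T (v ∘ σ) s := by
    rw [hc0]; exact div_mul_cancel₀ _ (Nat.cast_ne_zero.mpr (by omega))
  have hcast2 : (t:ℝ) = (s:ℝ) + ℓ := by rw [hts]; push_cast; ring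
  have hwt : wk T (v ∘ σ) t = wk T (v ∘ σ) (s + ℓ) := by rw [hts]
  rw [hwt, hcast2] at hmax
  have hr : c0 * (((s:ℝ) + ℓ) - (i:ℝ)) = c0 * (ℓ:ℝ) + c0 * ((s:ℝ) - (i:ℝ)) := by ring
  nlinarith [hcl, hmax, hr]

include hτ ht1 htT hts ha hpred in
lemma P2 : ∀ r : ℕ, s < r → r ≤ T - ℓ →
    ((wk T (v ∘ σ ∘ τ) T - wk T (v ∘ σ ∘ τ) (T - ℓ)) / (ℓ:ℝ)) * ((r:ℝ) - s)
      < wk T (v ∘ σ ∘ τ) r - wk T (v ∘ σ ∘ τ) s := by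
  intro r hr1 hr2
  have hsl : s + ℓ ≤ T := by omega
  rw [c_eq hτ htT hts ha, W1 hτ hsl ha (le_refl s), W2 hτ hsl ha hr1.le hr2]
  set c0 := (wk T (v ∘ σ) (s + ℓ) - wk T (v ∘ σ) s) / (ℓ:ℝ) with hc0
  have hps := pred_slope hpred (i := s) (j := r + ℓ) (by omega) (by omega) (by omega)
  rw [slope_c htT hts ha] at hps
  have hden : (0:ℝ) < ((r+ℓ:ℕ):ℝ) - (t:ℝ) := by
    have : t < r + ℓ := by omega
    have := (Nat.cast_lt (α := ℝ)).mpr this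
    linarith
  rw [slope, lt_div_iff₀ hden] at hps
  have hcast : ((r+ℓ:ℕ):ℝ) - (t:ℝ) = (r:ℝ) - s := by rw [hts]; push_cast; ring
  rw [hcast] at hps
  have hwt : wk T (v ∘ σ) t = wk T (v ∘ σ) (s + ℓ) := by rw [hts]
  rw [hwt] at hps
  linarith [hps]

include hτ ht1 htT hts ha hsfun in
lemma P1 : ∀ j : ℕ, j < ℓ → j ≠ (ℓ - a) % ℓ →
    wk T (v ∘ σ ∘ τ) (T - ℓ + (ℓ - a) % ℓ)
      - ((wk T (v ∘ σ ∘ τ) T - wk T (v ∘ σ ∘ τ) (T - ℓ)) / (ℓ:ℝ)) * (((ℓ - a) % ℓ : ℕ):ℝ)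
    < wk T (v ∘ σ ∘ τ) (T - ℓ + j)
      - ((wk T (v ∘ σ ∘ τ) T - wk T (v ∘ σ ∘ τ) (T - ℓ)) / (ℓ:ℝ)) * (j:ℝ) := by
  intro j hj hne
  have hsl : s + ℓ ≤ T := by omega
  have hℓ : 0 < ℓ := by omega
  have hjs : (ℓ - a) % ℓ < ℓ := Nat.mod_lt _ hℓ
  rw [c_eq hτ htT hts ha]
  have hb1 := blk (v := v) (σ := σ) hτ hsl ha j hj.le
  have hb2 := blk (v := v) (σ := σ) hτ hsl ha ((ℓ - a) % ℓ) hjs.le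
  have hstar : (a + (ℓ - a) % ℓ) % ℓ = 0 := by
    rw [Nat.add_mod_mod]
    have : a + (ℓ - a) = ℓ := by omega
    rw [this, Nat.mod_self]
  have hm0 : (a + j) % ℓ ≠ 0 := by
    intro h0
    apply hne
    have := unrot (ℓ := ℓ) (a := a) (j := j) ha hj
    rw [Nat.add_comm j a, h0] at this
    rw [← this, Nat.zero_add]
  have hmlt : (a + j) % ℓ < ℓ := Nat.mod_lt _ hℓ
  have htpos := tilt_pos (v := v) (σ := σ) ht1 htT hts ha hsfun ((a + j) % ℓ) (by omega) hmlt
  have ht0 : tilt T (v ∘ σ) s ℓ 0 = 0 := by simp [tilt]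
  rw [hb1, hb2, hstar, ht0]
  linarith [htpos]

end Plemmas

section Inject
open scoped Classical
set_option linter.unusedSectionVars false
variable {T : ℕ} {v : Fin T → ℝ}

lemma comp_trans (v : Fin T → ℝ) (σ τ : Equiv.Perm (Fin T)) :
    v ∘ ⇑(τ.trans σ) = v ∘ ⇑σ ∘ ⇑τ := rfl

lemma jstar_eq {ℓ a : ℕ} (ha : a < ℓ) : (ℓ - a) % ℓ = if a = 0 then 0 else ℓ - a := by
  split_ifs with h
  · simp [h, Nat.mod_self]
  · exact Nat.mod_eq_of_lt (by omega)

lemma inj_core {ℓ : ℕ} {σ1 σ2 : Equiv.Perm (Fin T)} {t1 t2 a1 a2 : ℕ}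
    (ht1 : t1 ∈ Finset.Icc 1 T) (hp1 : pred T (v ∘ σ1) t1)
    (hf1 : t1 - sfun T (v ∘ σ1) t1 = ℓ) (ha1 : a1 < ℓ)
    (ht2 : t2 ∈ Finset.Icc 1 T) (hp2 : pred T (v ∘ σ2) t2)
    (hf2 : t2 - sfun T (v ∘ σ2) t2 = ℓ) (ha2 : a2 < ℓ)
    (heq : (mkPerm T (t1 - ℓ) ℓ a1).trans σ1 = (mkPerm T (t2 - ℓ) ℓ a2).trans σ2) :
    σ1 = σ2 ∧ t1 = t2 ∧ a1 = a2 := by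
  obtain ⟨ht11, ht1T⟩ := Finset.mem_Icc.mp ht1
  obtain ⟨ht21, ht2T⟩ := Finset.mem_Icc.mp ht2
  have hsl1 : sfun T (v ∘ σ1) t1 < t1 := sfun_lt ht11
  have hsl2 : sfun T (v ∘ σ2) t2 < t2 := sfun_lt ht21
  set s1 := t1 - ℓ with hs1def
  set s2 := t2 - ℓ with hs2def
  have hsf1 : sfun T (v ∘ σ1) t1 = s1 := by omega
  have hsf2 : sfun T (v ∘ σ2) t2 = s2 := by omega
  have hts1 : t1 = s1 + ℓ := by omega
  have hts2 : t2 = s2 + ℓ := by omega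
  have hb1 : s1 + ℓ ≤ T := by omega
  have hb2 : s2 + ℓ ≤ T := by omega
  have hτ1 : ∀ p : Fin T, ((mkPerm T s1 ℓ a1 p : Fin T) : ℕ) = pf T s1 ℓ a1 p.1 :=
    mkPerm_apply hb1 ha1
  have hτ2 : ∀ p : Fin T, ((mkPerm T s2 ℓ a2 p : Fin T) : ℕ) = pf T s2 ℓ a2 p.1 :=
    mkPerm_apply hb2 ha2
  -- the common image walk
  have hww : ∀ r, wk T (v ∘ ⇑σ1 ∘ ⇑(mkPerm T s1 ℓ a1)) r
      = wk T (v ∘ ⇑σ2 ∘ ⇑(mkPerm T s2 ℓ a2)) r := by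
    intro r
    rw [← comp_trans, ← comp_trans, heq]
  -- s1 = s2
  have hss : s1 = s2 := by
    rcases Nat.lt_trichotomy s1 s2 with h | h | h
    · exfalso
      have hP2 := P2 hτ1 ht11 ht1T hts1 ha1 hp1 s2 h (by omega)
      have hP3 := P3 hτ2 ht21 ht2T hts2 ha2 hsf2 s1 h
      rw [hww s2, hww s1, hww T, hww (T - ℓ)] at hP2
      linarith
    · exact h
    · exfalso
      have hP2 := P2 hτ2 ht21 ht2T hts2 ha2 hp2 s1 h (by omega)
      have hP3 := P3 hτ1 ht11 ht1T hts1 ha1 hsf1 s2 h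
      rw [← hww s2, ← hww s1, ← hww T, ← hww (T - ℓ)] at hP2
      linarith
  have htt : t1 = t2 := by omega
  -- a1 = a2
  have hjj : (ℓ - a1) % ℓ = (ℓ - a2) % ℓ := by
    by_contra hne
    have hj2 : (ℓ - a2) % ℓ < ℓ := Nat.mod_lt _ (by omega)
    have hj1 : (ℓ - a1) % ℓ < ℓ := Nat.mod_lt _ (by omega)
    have hA := P1 hτ1 ht11 ht1T hts1 ha1 hsf1 ((ℓ - a2) % ℓ) hj2 (fun h => hne h.symm)
    have hB := P1 hτ2 ht21 ht2T hts2 ha2 hsf2 ((ℓ - a1) % ℓ) hj1 hne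
    rw [hww (T - ℓ + (ℓ - a1) % ℓ), hww (T - ℓ + (ℓ - a2) % ℓ), hww T, hww (T - ℓ)] at hA
    linarith
  have haa : a1 = a2 := by
    have e1 := jstar_eq ha1
    have e2 := jstar_eq ha2
    split_ifs at e1 e2 <;> omega
  refine ⟨?_, htt, haa⟩
  have hππ : mkPerm T s1 ℓ a1 = mkPerm T s2 ℓ a2 := by rw [hss, haa]
  rw [hππ] at heq
  refine Equiv.ext fun i => ?_
  have h := congrArg (fun (e : Equiv.Perm (Fin T)) => e ((mkPerm T s2 ℓ a2).symm i)) heq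
  simpa [Equiv.trans_apply, Equiv.apply_symm_apply] using h

/-- main deterministic counting bound -/
lemma key (v : Fin T → ℝ) :
    ∑ σ : Equiv.Perm (Fin T),
        (((Finset.Icc 1 T).filter (pred T (v ∘ σ))).card : ℝ)
      ≤ (Nat.factorial T : ℝ) * ∑ k ∈ Finset.Icc 1 T, (1:ℝ)/k := by
  classical
  set B := (Finset.univ : Finset (Equiv.Perm (Fin T))).sigma
      (fun σ => (Finset.Icc 1 T).filter (pred T (v ∘ σ))) with hB
  have hBcard : B.card = ∑ σ : Equiv.Perm (Fin T),
      ((Finset.Icc 1 T).filter (pred T (v ∘ σ))).card := Finset.card_sigma _ _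
  set f : (Σ _ : Equiv.Perm (Fin T), ℕ) → ℕ :=
      fun q => q.2 - sfun T (v ∘ q.1) q.2 with hf
  have hmem : ∀ q ∈ B, f q ∈ Finset.Icc 1 T := by
    intro q hq
    rw [hB, Finset.mem_sigma] at hq
    obtain ⟨-, hq2⟩ := hq
    rw [Finset.mem_filter, Finset.mem_Icc] at hq2
    have h2 := sfun_lt (T := T) (u := v ∘ q.1) (t := q.2) hq2.1.1
    have h3 : f q = q.2 - sfun T (v ∘ q.1) q.2 := rfl
    rw [Finset.mem_Icc, h3]
    omega
  have hpart := Finset.card_eq_sum_card_fiberwise hmem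
  -- per-fiber bound
  have hfiber : ∀ ℓ ∈ Finset.Icc 1 T,
      (B.filter (fun q => f q = ℓ)).card * ℓ ≤ Nat.factorial T := by
    intro ℓ hℓ
    rw [Finset.mem_Icc] at hℓ
    have hcard : ((B.filter (fun q => f q = ℓ)) ×ˢ Finset.range ℓ).card
        = (B.filter (fun q => f q = ℓ)).card * ℓ := by
      rw [Finset.card_product, Finset.card_range]
    rw [← hcard]
    have := Finset.card_le_card_of_injOn
      (f := fun q : (Σ _ : Equiv.Perm (Fin T), ℕ) × ℕ =>
        (mkPerm T (q.1.2 - ℓ) ℓ q.2).trans q.1.1)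
      (s := (B.filter (fun q => f q = ℓ)) ×ˢ Finset.range ℓ)
      (t := (Finset.univ : Finset (Equiv.Perm (Fin T))))
      (fun _ _ => Finset.mem_univ _) ?_
    · calc ((B.filter (fun q => f q = ℓ)) ×ˢ Finset.range ℓ).card
          ≤ (Finset.univ : Finset (Equiv.Perm (Fin T))).card := this
        _ = Nat.factorial T := by
            rw [Finset.card_univ, Fintype.card_perm, Fintype.card_fin]
    · intro q1 hq1 q2 hq2 heq
      obtain ⟨⟨σ1, t1⟩, a1⟩ := q1
      obtain ⟨⟨σ2, t2⟩, a2⟩ := q2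
      rw [Finset.mem_coe, Finset.mem_product, Finset.mem_filter] at hq1 hq2
      obtain ⟨⟨hq1B, hq1f⟩, hq1a⟩ := hq1
      obtain ⟨⟨hq2B, hq2f⟩, hq2a⟩ := hq2
      rw [hB, Finset.mem_sigma, Finset.mem_filter] at hq1B hq2B
      have h1 := inj_core (v := v) hq1B.2.1 hq1B.2.2 hq1f (Finset.mem_range.mp hq1a)
        hq2B.2.1 hq2B.2.2 hq2f (Finset.mem_range.mp hq2a) heq
      obtain ⟨hσ, htt2, haa2⟩ := h1
      subst hσ; subst htt2; subst haa2; rfl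
  -- assemble over ℝ
  have hreal : ∀ ℓ ∈ Finset.Icc 1 T,
      ((B.filter (fun q => f q = ℓ)).card : ℝ) ≤ (Nat.factorial T : ℝ) * (1 / ℓ) := by
    intro ℓ hℓ
    rw [Finset.mem_Icc] at hℓ
    have h := hfiber ℓ (Finset.mem_Icc.mpr hℓ)
    have hℓpos : (0:ℝ) < (ℓ:ℝ) := by exact_mod_cast Nat.pos_of_ne_zero (by omega)
    rw [mul_one_div, le_div_iff₀ hℓpos]
    exact_mod_cast h
  calc ∑ σ : Equiv.Perm (Fin T), (((Finset.Icc 1 T).filter (pred T (v ∘ σ))).card : ℝ)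
      = (B.card : ℝ) := by rw [hBcard]; push_cast; rfl
    _ = ∑ ℓ ∈ Finset.Icc 1 T, ((B.filter (fun q => f q = ℓ)).card : ℝ) := by
        rw [hpart]; push_cast; rfl
    _ ≤ ∑ ℓ ∈ Finset.Icc 1 T, (Nat.factorial T : ℝ) * (1 / ℓ) :=
        Finset.sum_le_sum hreal
    _ = (Nat.factorial T : ℝ) * ∑ k ∈ Finset.Icc 1 T, (1:ℝ)/k := by
        rw [← Finset.mul_sum]
end Inject

section Prob
open scoped Classical
open MeasureTheory

variable {T : ℕ}

noncomputable def F (T : ℕ) (v : Fin T → ℝ) : ℕ :=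
  ((Finset.Icc 1 T).filter (pred T v)).card

lemma F_le (v : Fin T → ℝ) : F T v ≤ T := by
  have h1 : F T v ≤ (Finset.Icc 1 T).card := Finset.card_filter_le _ _
  rwa [Nat.card_Icc, Nat.add_sub_cancel] at h1

lemma ext_meas (T p : ℕ) : Measurable (fun v : Fin T → ℝ => ext T v p) := by
  unfold ext
  by_cases hp : p < T
  · simp only [dif_pos hp]; exact measurable_pi_apply _
  · simp only [dif_neg hp]; exact measurable_const

lemma wk_meas (T r : ℕ) : Measurable (fun v : Fin T → ℝ => wk T v r) := by
  unfold wk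
  exact Finset.measurable_sum _ (fun p _ => ext_meas T p)

lemma predset_meas (T t : ℕ) : MeasurableSet {v : Fin T → ℝ | pred T v t} := by
  have h : {v : Fin T → ℝ | pred T v t}
      = ⋂ (i : ℕ), ⋂ (j : ℕ), ⋂ (_ : i < t), ⋂ (_ : t < j), ⋂ (_ : j ≤ T),
        {v : Fin T → ℝ | wk T v t < wk T v i
          + (wk T v j - wk T v i) * (((t:ℝ) - i) / ((j:ℝ) - i))} := by
    ext v
    simp only [Set.mem_setOf_eq, Set.mem_iInter, pred]
  rw [h]
  refine MeasurableSet.iInter fun i => MeasurableSet.iInter fun j =>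
    MeasurableSet.iInter fun _ => MeasurableSet.iInter fun _ => MeasurableSet.iInter fun _ => ?_
  exact measurableSet_lt (wk_meas T t)
    (((wk_meas T i)).add (((wk_meas T j).sub (wk_meas T i)).mul_const _))

lemma F_meas : Measurable (fun v : Fin T → ℝ => (F T v : ℝ)) := by
  have h : (fun v : Fin T → ℝ => (F T v : ℝ))
      = fun v => ∑ t ∈ Finset.Icc 1 T, if pred T v t then (1:ℝ) else 0 := by
    funext v
    rw [F, Finset.card_filter]
    push_cast
    exact Finset.sum_congr rfl (fun t _ => by split_ifs <;> simp)
  rw [h]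
  refine Finset.measurable_sum _ (fun t _ => Measurable.ite (predset_meas T t) ?_ ?_) <;>
    exact measurable_const

end Prob

end SA

/-- Sparre Andersen-type bound: for exchangeable real random variables
`X_1,…,X_T` with atomless joint distribution and partial sums `S t`, the
expected number of vertices of the lower convex minorant of `(t, S t)`,
`t = 0,…,T`, excluding the endpoint `(0, 0)`, is at most the harmonic number
`∑_{k=1}^T 1/k ≤ log T + 1`. -/
theorem expected_convex_minorant_vertices {Ω : Type*} [MeasureSpace Ω]
    [IsProbabilityMeasure (ℙ : Measure Ω)]
    (T : ℕ) (hT : 0 < T) (X : Fin T → Ω → ℝ)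
    (hmeas : ∀ i, Measurable (X i))
    (hexch : ∀ σ : Equiv.Perm (Fin T),
      Measure.map (fun ω => fun i => X (σ i) ω) (ℙ : Measure Ω)
        = Measure.map (fun ω => fun i => X i ω) (ℙ : Measure Ω))
    (hatomless : ∀ v : Fin T → ℝ, Measure.map (fun ω => fun i => X i ω) (ℙ : Measure Ω) {v} = 0)
    (S : ℕ → Ω → ℝ)
    (hS : ∀ t ω, S t ω = ∑ i : Fin T, if (i : ℕ) < t then X i ω else 0)
    (N : Ω → ℕ)
    (hN : ∀ ω, N ω = ((Finset.Icc 1 T).filter (fun t =>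
      ∀ i j : ℕ, i < t → t < j → j ≤ T →
        S t ω < S i ω + (S j ω - S i ω) * (((t : ℝ) - i) / ((j : ℝ) - i)))).card) :
    (∫ ω : Ω, (N ω : ℝ) ∂(ℙ : Measure Ω) ≤ ∑ k ∈ Finset.Icc 1 T, (1 : ℝ) / k) ∧
    (∑ k ∈ Finset.Icc 1 T, (1 : ℝ) / k ≤ Real.log T + 1) := by
  constructor
  · -- main bound
    set vecX : Ω → (Fin T → ℝ) := fun ω i => X i ω with hvecX
    have hvm : Measurable vecX := measurable_pi_lambda _ (fun i => hmeas i)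
    -- identify N with F ∘ vecX
    have hNF : ∀ ω, (N ω : ℝ) = (SA.F T (vecX ω) : ℝ) := by
      intro ω
      have hfil : (Finset.Icc 1 T).filter (fun t =>
          ∀ i j : ℕ, i < t → t < j → j ≤ T →
            S t ω < S i ω + (S j ω - S i ω) * (((t : ℝ) - i) / ((j : ℝ) - i)))
          = (Finset.Icc 1 T).filter (SA.pred T (vecX ω)) :=
        Finset.filter_congr (fun t _ => by simp only [hS, SA.wv_eq, SA.pred]; rfl)
      rw [hN ω, SA.F, hfil]
    have hNfun : (fun ω => (N ω : ℝ)) = fun ω => (SA.F T (vecX ω) : ℝ) := funext hNF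
    -- permuted versions all have the same integral
    have hσmeas : ∀ σ : Equiv.Perm (Fin T),
        Measurable (fun ω => (fun i => X (σ i) ω)) :=
      fun σ => measurable_pi_lambda _ (fun i => hmeas (σ i))
    have hmapeq : ∀ σ : Equiv.Perm (Fin T),
        ∫ ω, (SA.F T (vecX ω ∘ σ) : ℝ) ∂(ℙ : Measure Ω)
          = ∫ ω, (SA.F T (vecX ω) : ℝ) ∂(ℙ : Measure Ω) := by
      intro σ
      have e1 : (fun ω => (SA.F T (vecX ω ∘ σ) : ℝ))
          = (fun v : Fin T → ℝ => (SA.F T v : ℝ)) ∘ (fun ω => (fun i => X (σ i) ω)) := rfl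
      have h1 : ∫ ω, (SA.F T (vecX ω ∘ σ) : ℝ) ∂(ℙ : Measure Ω)
          = ∫ v, (SA.F T v : ℝ) ∂(Measure.map (fun ω => (fun i => X (σ i) ω)) ℙ) := by
        rw [integral_map (hσmeas σ).aemeasurable SA.F_meas.aestronglyMeasurable]
        rfl
      have h2 : ∫ ω, (SA.F T (vecX ω) : ℝ) ∂(ℙ : Measure Ω)
          = ∫ v, (SA.F T v : ℝ) ∂(Measure.map (fun ω => (fun i => X i ω)) ℙ) := by
        rw [integral_map hvm.aemeasurable SA.F_meas.aestronglyMeasurable]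
      rw [h1, h2, hexch σ]
    -- integrability
    have hint : ∀ σ : Equiv.Perm (Fin T),
        Integrable (fun ω => (SA.F T (vecX ω ∘ σ) : ℝ)) (ℙ : Measure Ω) := by
      intro σ
      refine (integrable_const (T:ℝ)).mono' ?_ ?_
      · exact (SA.F_meas.comp (hσmeas σ)).aestronglyMeasurable
      · refine Filter.Eventually.of_forall fun ω => ?_
        rw [Real.norm_eq_abs, abs_of_nonneg (by positivity)]
        exact_mod_cast SA.F_le (vecX ω ∘ σ)
    -- pointwise deterministic bound
    have hkey : ∀ ω, ∑ σ : Equiv.Perm (Fin T), (SA.F T (vecX ω ∘ σ) : ℝ)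
        ≤ (Nat.factorial T : ℝ) * ∑ k ∈ Finset.Icc 1 T, (1 : ℝ) / k :=
      fun ω => SA.key (vecX ω)
    have hfact : (0:ℝ) < (Nat.factorial T : ℝ) := by
      exact_mod_cast Nat.factorial_pos T
    have hmain : (Nat.factorial T : ℝ) * ∫ ω, (N ω : ℝ) ∂(ℙ : Measure Ω)
        ≤ (Nat.factorial T : ℝ) * ∑ k ∈ Finset.Icc 1 T, (1 : ℝ) / k := by
      have e1 : (Nat.factorial T : ℝ) * ∫ ω, (N ω : ℝ) ∂(ℙ : Measure Ω)
          = ∑ σ : Equiv.Perm (Fin T), ∫ ω, (SA.F T (vecX ω ∘ σ) : ℝ) ∂(ℙ : Measure Ω) := by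
        rw [hNfun]
        have : ∀ σ : Equiv.Perm (Fin T),
            ∫ ω, (SA.F T (vecX ω ∘ σ) : ℝ) ∂(ℙ : Measure Ω)
              = ∫ ω, (SA.F T (vecX ω) : ℝ) ∂(ℙ : Measure Ω) := hmapeq
        rw [Finset.sum_congr rfl (fun σ _ => this σ), Finset.sum_const, Finset.card_univ,
          Fintype.card_perm, Fintype.card_fin, nsmul_eq_mul]
      rw [e1, ← integral_finset_sum _ (fun σ _ => hint σ)]
      have e2 : (Nat.factorial T : ℝ) * ∑ k ∈ Finset.Icc 1 T, (1 : ℝ) / k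
          = ∫ _ : Ω, ((Nat.factorial T : ℝ) * ∑ k ∈ Finset.Icc 1 T, (1 : ℝ) / k)
              ∂(ℙ : Measure Ω) := by
        rw [integral_const]; simp
      rw [e2]
      exact integral_mono (integrable_finset_sum _ (fun σ _ => hint σ)) (integrable_const _)
        (fun ω => hkey ω)
    exact le_of_mul_le_mul_left hmain hfact
  · -- harmonic bound
    have h := harmonic_le_one_add_log T
    have heq : (harmonic T : ℝ) = ∑ k ∈ Finset.Icc 1 T, (1:ℝ)/k := by
      rw [harmonic_eq_sum_Icc]; push_cast; simp [one_div]
    linarith
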